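/- There exist an open neighborhood U ⊆ ℂ² of (1,1) and holomorphic maps g⁺, g⁻ : U → ℂ² with g^±(1,1) = (1/2, 1/4) such that for every (s₁,s₂) ∈ U the point g^±(s₁,s₂) is a non-degenerate critical point of the function (z₁,z₂) ↦ Φ^{±(s₁,s₂)}(z₁,z₂): both complex partial derivatives ∂Φ^{±(s₁,s₂)}/∂z₁ and ∂Φ^{±(s₁,s₂)}/∂z₂ vanish at g^±(s₁,s₂), and the determinant of the complex Hessian in (z₁,z₂) of Φ^{±(s₁,s₂)} at g^±(s₁,s₂) is nonzero. -/

import Mathlib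

open Real

/-- The dilogarithm `Li₂(z) = -∫₀¹ log(1 - t z)/t dt` (principal branch of `log`). -/
noncomputable def Li2 (z : ℂ) : ℂ :=
  -∫ t in (0:ℝ)..1, Complex.log (1 - (t:ℂ) * z) / (t:ℂ)

/-- The potential function `Φ^{ε(s₁,s₂)}(z₁,z₂)` of the Whitehead link, where `ε = 1`
gives `Φ^{+(s₁,s₂)}` and `ε = -1` gives `Φ^{-(s₁,s₂)}`. -/
noncomputable def PhiS (ε s₁ s₂ z₁ z₂ : ℂ) : ℂ :=
  (1 / (2 * (π:ℂ) * Complex.I)) *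
    (ε * (2*(π:ℂ)*Complex.I*(s₁ - 1)) * (2*(π:ℂ)*Complex.I*(z₁ - 1/2))
     - (2*(π:ℂ)*Complex.I*(s₂ - 1)) * (2*(π:ℂ)*Complex.I*z₁ + 2*(π:ℂ)*Complex.I*z₂)
     + Li2 (Complex.exp (2*(π:ℂ)*Complex.I*(s₂ - 1) - 2*(π:ℂ)*Complex.I*z₁
            - 2*(π:ℂ)*Complex.I*z₂))
     - Li2 (Complex.exp (2*(π:ℂ)*Complex.I*(s₂ - 1) - 2*(π:ℂ)*Complex.I*z₂))
     + Li2 (Complex.exp (2*(π:ℂ)*Complex.I*z₂))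
     - Li2 (Complex.exp (2*(π:ℂ)*Complex.I*(z₁ + z₂)))
     + Li2 (Complex.exp (2*(π:ℂ)*Complex.I*z₁)))

/-- `p` is a non-degenerate critical point of `(z₁,z₂) ↦ PhiS ε s.1 s.2 z₁ z₂`:
both complex partial derivatives vanish at `p` and the determinant of the complex
Hessian at `p` is nonzero. -/
noncomputable def IsNondegCritPt (ε : ℂ) (s p : ℂ × ℂ) : Prop :=
  deriv (fun z => PhiS ε s.1 s.2 z p.2) p.1 = 0 ∧
  deriv (fun z => PhiS ε s.1 s.2 p.1 z) p.2 = 0 ∧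
  deriv (fun z => deriv (fun w => PhiS ε s.1 s.2 w p.2) z) p.1 *
      deriv (fun z => deriv (fun w => PhiS ε s.1 s.2 p.1 w) z) p.2 -
    (deriv (fun z => deriv (fun w => PhiS ε s.1 s.2 z w) p.2) p.1) ^ 2 ≠ 0



open Complex Metric Set intervalIntegral MeasureTheory Filter Topology

lemma slit_seg {w : ℂ} (hw : 1 - w ∈ Complex.slitPlane) {t : ℝ} (ht0 : 0 ≤ t) (ht1 : t ≤ 1) :
    1 - (t:ℂ) * w ∈ Complex.slitPlane := by
  rcases eq_or_ne w.im 0 with him | him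
  · have hre : w.re < 1 := by
      rcases Complex.mem_slitPlane_iff.mp hw with h | h
      · simpa using h
      · exact absurd (by simp [him]) h
    apply Complex.mem_slitPlane_iff.mpr
    left
    simp only [Complex.sub_re, Complex.one_re, Complex.mul_re, Complex.ofReal_re,
      Complex.ofReal_im, him, mul_zero, zero_mul, sub_zero]
    rcases le_or_gt w.re 0 with h0 | h0
    · nlinarith
    · nlinarith
  · rcases eq_or_ne t 0 with ht | ht
    · simp [ht]
    · apply Complex.mem_slitPlane_iff.mpr
      right
      simp only [Complex.sub_im, Complex.one_im, Complex.mul_im, Complex.ofReal_re,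
        Complex.ofReal_im, zero_mul, add_zero, zero_sub, neg_ne_zero]
      exact mul_ne_zero (by exact_mod_cast lt_of_le_of_ne ht0 (Ne.symm ht) |>.ne') him

lemma Li2_hasDerivAt {z : ℂ} (hz : 1 - z ∈ Complex.slitPlane) (hz0 : z ≠ 0) :
    HasDerivAt Li2 (-(Complex.log (1 - z)) / z) z := by
  obtain ⟨r, hr0, hball⟩ : ∃ r > 0, Metric.closedBall z r ⊆ {w : ℂ | 1 - w ∈ Complex.slitPlane} := by
    have hSopen : IsOpen {w : ℂ | 1 - w ∈ Complex.slitPlane} :=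
      Complex.isOpen_slitPlane.preimage (by continuity)
    rcases Metric.isOpen_iff.mp hSopen z hz with ⟨δ, hδ, hsub⟩
    exact ⟨δ/2, by positivity, (Metric.closedBall_subset_ball (by linarith)).trans hsub⟩
  obtain ⟨p, hpK, hpmin'⟩ :=
    (isCompact_Icc.prod (isCompact_closedBall z r)).exists_isMinOn
      ((Set.nonempty_Icc.mpr zero_le_one).prod ⟨z, Metric.mem_closedBall_self hr0.le⟩)
      (Continuous.continuousOn (by continuity : Continuous fun p : ℝ × ℂ => ‖1 - (p.1:ℂ) * p.2‖))
  have hpmin := isMinOn_iff.mp hpmin'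
  set m : ℝ := ‖1 - (p.1:ℂ) * p.2‖ with hm
  have hmpos : 0 < m := by
    rw [hm, norm_pos_iff]
    exact Complex.slitPlane_ne_zero (slit_seg (hball hpK.2) hpK.1.1 hpK.1.2)
  have hlow : ∀ (t : ℝ), t ∈ Set.Icc (0:ℝ) 1 → ∀ w ∈ Metric.closedBall z r,
      m ≤ ‖1 - (t:ℂ)*w‖ := fun t ht w hw => hpmin (t, w) ⟨ht, hw⟩
  have hne : ∀ (t : ℝ), t ∈ Set.Icc (0:ℝ) 1 → ∀ w ∈ Metric.closedBall z r,
      (1 - (t:ℂ)*w) ≠ 0 := by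
    intro t ht w hw
    exact Complex.slitPlane_ne_zero (slit_seg (hball hw) ht.1 ht.2)
  -- measurability
  have haesm : ∀ w ∈ Metric.closedBall z r,
      AEStronglyMeasurable (fun t : ℝ => Complex.log (1 - (t:ℂ) * w) / (t:ℂ))
        (MeasureTheory.volume.restrict (Set.uIoc (0:ℝ) 1)) := by
    intro w hw
    rw [Set.uIoc_of_le (zero_le_one' ℝ)]
    apply ContinuousOn.aestronglyMeasurable ?_ measurableSet_Ioc
    intro t ht
    apply ContinuousWithinAt.div
    · exact (ContinuousAt.comp (x := t) (g := Complex.log) (f := fun u : ℝ => 1 - (u:ℂ)*w)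
        (continuousAt_clog (slit_seg (hball hw) ht.1.le ht.2))
        (by fun_prop)).continuousWithinAt
    · exact Complex.continuous_ofReal.continuousWithinAt
    · exact Complex.ofReal_ne_zero.mpr ht.1.ne'
  -- bound on log
  have hlogb : ∀ w ∈ Metric.closedBall z r, ∀ t ∈ Set.Icc (0:ℝ) 1,
      ‖Complex.log (1 - (t:ℂ) * w)‖ ≤ (‖w‖ / m) * t := by
    intro w hw t ht
    have key : ∀ u ∈ Set.Icc (0:ℝ) 1, HasDerivWithinAt (fun u : ℝ => Complex.log (1 - (u:ℂ)*w))
        ((fun u : ℝ => (1 - (u:ℂ)*w)⁻¹ * (-w)) u) (Set.Icc 0 1) u := by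
      intro u hu
      apply HasDerivAt.hasDerivWithinAt
      have hin : HasDerivAt (fun y : ℂ => 1 - y * w) (-w) ((u:ℝ):ℂ) := by
        simpa using ((hasDerivAt_id ((u:ℝ):ℂ)).mul_const w).const_sub 1
      exact (Complex.hasDerivAt_log (slit_seg (hball hw) hu.1 hu.2)).comp u hin.comp_ofReal
    have hC : ∀ u ∈ Set.Icc (0:ℝ) 1, ‖(1 - (u:ℂ)*w)⁻¹ * (-w)‖ ≤ ‖w‖/m := by
      intro u hu
      rw [norm_mul, norm_inv, norm_neg, div_eq_mul_inv, mul_comm (‖w‖)]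
      gcongr
      exact hlow u hu w hw
    have hb := Convex.norm_image_sub_le_of_norm_hasDerivWithin_le key hC (convex_Icc 0 1)
        (Set.left_mem_Icc.mpr zero_le_one) ht
    simp only [Complex.ofReal_zero, zero_mul, sub_zero, Complex.log_one, sub_zero] at hb
    calc ‖Complex.log (1 - (t:ℂ)*w)‖ ≤ (‖w‖/m) * ‖t‖ := hb
    _ = (‖w‖/m) * t := by rw [Real.norm_eq_abs, _root_.abs_of_nonneg ht.1]
  -- integrability of F w
  have hint : ∀ w ∈ Metric.closedBall z r,
      IntervalIntegrable (fun t : ℝ => Complex.log (1 - (t:ℂ)*w) / (t:ℂ))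
        MeasureTheory.volume 0 1 := by
    intro w hw
    have h := haesm w hw
    rw [Set.uIoc_of_le (zero_le_one' ℝ)] at h
    rw [intervalIntegrable_iff, Set.uIoc_of_le (zero_le_one' ℝ)]
    apply MeasureTheory.Integrable.mono' (g := fun _ : ℝ => ‖w‖/m)
      (MeasureTheory.integrableOn_const measure_Ioc_lt_top.ne) h
    refine (MeasureTheory.ae_restrict_iff' measurableSet_Ioc).mpr (Filter.Eventually.of_forall ?_)
    intro t ht
    have hb := hlogb w hw t ⟨ht.1.le, ht.2⟩
    rw [norm_div, Complex.norm_real, Real.norm_eq_abs, _root_.abs_of_nonneg ht.1.le,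
      div_le_iff₀ ht.1]
    linarith [hb]
  have hF'_meas : MeasureTheory.AEStronglyMeasurable (fun t : ℝ => -(1 - (t:ℂ)*z)⁻¹)
      (MeasureTheory.volume.restrict (Set.uIoc (0:ℝ) 1)) := by
    rw [Set.uIoc_of_le (zero_le_one' ℝ)]
    apply ContinuousOn.aestronglyMeasurable ?_ measurableSet_Ioc
    apply ContinuousOn.neg
    apply ContinuousOn.inv₀
    · fun_prop
    · exact fun t ht => hne t ⟨ht.1.le, ht.2⟩ z (Metric.mem_closedBall_self hr0.le)
  have h_bound : ∀ᵐ t ∂(MeasureTheory.volume : MeasureTheory.Measure ℝ), t ∈ Set.uIoc (0:ℝ) 1 →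
      ∀ x ∈ Metric.ball z r, ‖-(1 - (t:ℂ)*x)⁻¹‖ ≤ m⁻¹ := by
    refine Filter.Eventually.of_forall (fun t ht x hx => ?_)
    rw [Set.uIoc_of_le (zero_le_one' ℝ)] at ht
    rw [norm_neg, norm_inv]
    exact inv_anti₀ hmpos (hlow t ⟨ht.1.le, ht.2⟩ x (Metric.ball_subset_closedBall hx))
  have h_diff : ∀ᵐ t ∂(MeasureTheory.volume : MeasureTheory.Measure ℝ), t ∈ Set.uIoc (0:ℝ) 1 →
      ∀ x ∈ Metric.ball z r, HasDerivAt (fun x : ℂ => Complex.log (1 - (t:ℂ)*x) / (t:ℂ))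
        (-(1 - (t:ℂ)*x)⁻¹) x := by
    refine Filter.Eventually.of_forall (fun t ht x hx => ?_)
    rw [Set.uIoc_of_le (zero_le_one' ℝ)] at ht
    have hxc := Metric.ball_subset_closedBall hx
    have htC : (t:ℂ) ≠ 0 := Complex.ofReal_ne_zero.mpr ht.1.ne'
    have hin : HasDerivAt (fun x : ℂ => 1 - (t:ℂ)*x) (-(t:ℂ)) x := by
      simpa using ((hasDerivAt_id x).const_mul (t:ℂ)).const_sub 1
    have hlog := (Complex.hasDerivAt_log (slit_seg (hball hxc) ht.1.le ht.2)).comp x hin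
    have h2 : HasDerivAt (fun x : ℂ => Complex.log (1 - (t:ℂ)*x) / (t:ℂ))
        (((1 - (t:ℂ)*x)⁻¹ * -(t:ℂ)) / (t:ℂ)) x := by
      simpa [Function.comp_def] using hlog.div_const (t:ℂ)
    convert h2 using 1
    have hne' := hne t ⟨ht.1.le, ht.2⟩ x hxc
    field_simp
  have main := intervalIntegral.hasDerivAt_integral_of_dominated_loc_of_deriv_le
    (F := fun (x : ℂ) (t : ℝ) => Complex.log (1 - (t:ℂ)*x) / (t:ℂ))
    (F' := fun (x : ℂ) (t : ℝ) => -(1 - (t:ℂ)*x)⁻¹) (x₀ := z) (a := 0) (b := 1)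
    (bound := fun _ => m⁻¹) (μ := MeasureTheory.volume) (Metric.ball_mem_nhds z hr0)
    (Filter.eventually_of_mem (Metric.closedBall_mem_nhds z hr0) haesm)
    (hint z (Metric.mem_closedBall_self hr0.le))
    hF'_meas h_bound intervalIntegrable_const h_diff
  -- value of the integral
  have hftc : (∫ t in (0:ℝ)..1, (1 - (t:ℂ)*z)⁻¹) = -(Complex.log (1-z))/z := by
    have hd : ∀ t ∈ Set.uIcc (0:ℝ) 1, HasDerivAt (fun t : ℝ => -(Complex.log (1 - (t:ℂ)*z)/z))
        ((1 - (t:ℂ)*z)⁻¹) t := by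
      intro t ht
      rw [Set.uIcc_of_le (zero_le_one' ℝ)] at ht
      have hin : HasDerivAt (fun y : ℂ => 1 - y * z) (-z) ((t:ℝ):ℂ) := by
        simpa using ((hasDerivAt_id ((t:ℝ):ℂ)).mul_const z).const_sub 1
      have hlog := ((Complex.hasDerivAt_log
        (slit_seg (hball (Metric.mem_closedBall_self hr0.le)) ht.1 ht.2)).comp t hin.comp_ofReal)
      have h2 := (hlog.div_const z).neg
      refine h2.congr_deriv ?_
      rw [mul_div_assoc, neg_div, div_self hz0, mul_neg_one, neg_neg]
    have hi : IntervalIntegrable (fun t : ℝ => (1 - (t:ℂ)*z)⁻¹) MeasureTheory.volume 0 1 := by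
      apply ContinuousOn.intervalIntegrable
      apply ContinuousOn.inv₀
      · fun_prop
      · intro t ht
        rw [Set.uIcc_of_le (zero_le_one' ℝ)] at ht
        exact hne t ht z (Metric.mem_closedBall_self hr0.le)
    have := intervalIntegral.integral_eq_sub_of_hasDerivAt hd hi
    rw [this]
    simp [Complex.log_one]
    ring
  have hres : HasDerivAt (fun x : ℂ => -∫ t in (0:ℝ)..1, Complex.log (1 - (t:ℂ)*x)/(t:ℂ))
      (-(Complex.log (1-z))/z) z := by
    have h := main.2.neg
    rw [intervalIntegral.integral_neg, neg_neg, hftc] at h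
    exact h
  exact hres

lemma hasDerivAt_Li2_exp {w : ℂ} (h : 1 - Complex.exp w ∈ Complex.slitPlane) :
    HasDerivAt (fun w => Li2 (Complex.exp w)) (-Complex.log (1 - Complex.exp w)) w := by
  have h1 := (Li2_hasDerivAt h (Complex.exp_ne_zero w)).comp w (Complex.hasDerivAt_exp w)
  have h2 : HasDerivAt (fun w => Li2 (Complex.exp w))
      (-Complex.log (1 - Complex.exp w) / Complex.exp w * Complex.exp w) w := by
    simpa [Function.comp_def] using h1
  convert h2 using 1
  field_simp

lemma hasDerivAt_Li2_exp_comp {f : ℂ → ℂ} {f' x : ℂ} (hf : HasDerivAt f f' x)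
    (h : 1 - Complex.exp (f x) ∈ Complex.slitPlane) :
    HasDerivAt (fun w => Li2 (Complex.exp (f w))) (-Complex.log (1 - Complex.exp (f x)) * f') x := by
  simpa [Function.comp_def] using (hasDerivAt_Li2_exp h).comp x hf

lemma hasDerivAt_log_one_sub_exp_comp {f : ℂ → ℂ} {f' x : ℂ} (hf : HasDerivAt f f' x)
    (h : 1 - Complex.exp (f x) ∈ Complex.slitPlane) :
    HasDerivAt (fun w => Complex.log (1 - Complex.exp (f w)))
      (-(Complex.exp (f x) / (1 - Complex.exp (f x))) * f') x := by
  have hexp := (Complex.hasDerivAt_exp (f x)).comp x hf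
  have hin : HasDerivAt (fun w : ℂ => 1 - Complex.exp (f w)) (-(Complex.exp (f x) * f')) x :=
    hexp.const_sub 1
  have hlog := (Complex.hasDerivAt_log h).comp x hin
  have h2 : HasDerivAt (fun w => Complex.log (1 - Complex.exp (f w)))
      ((1 - Complex.exp (f x))⁻¹ * -(Complex.exp (f x) * f')) x := by
    simpa [Function.comp_def] using hlog
  convert h2 using 1
  rw [div_eq_mul_inv]
  ring

local notation "cc" => (2*(π:ℂ)*Complex.I)

abbrev XX := (ℂ × ℂ) × ℂ × ℂ

lemma cc_ne : (2*(π:ℂ)*Complex.I) ≠ 0 :=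
  mul_ne_zero (mul_ne_zero two_ne_zero (Complex.ofReal_ne_zero.mpr Real.pi_ne_zero))
    Complex.I_ne_zero

noncomputable def ee1 (x : XX) : ℂ := Complex.exp (cc*(x.1.2 - 1) - cc*x.2.1 - cc*x.2.2)
noncomputable def ee2 (x : XX) : ℂ := Complex.exp (cc*(x.1.2 - 1) - cc*x.2.2)
noncomputable def ee3 (x : XX) : ℂ := Complex.exp (cc*x.2.2)
noncomputable def ee4 (x : XX) : ℂ := Complex.exp (cc*(x.2.1 + x.2.2))
noncomputable def ee5 (x : XX) : ℂ := Complex.exp (cc*x.2.1)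

noncomputable def LL (w : ℂ) : ℂ := Complex.log (1 - w)
noncomputable def QQ (w : ℂ) : ℂ := w / (1 - w)

noncomputable def FF1 (ε : ℂ) (x : XX) : ℂ :=
  ε*cc*(x.1.1-1) - cc*(x.1.2-1) + LL (ee1 x) + LL (ee4 x) - LL (ee5 x)
noncomputable def FF2 (x : XX) : ℂ :=
  -(cc*(x.1.2-1)) + LL (ee1 x) - LL (ee2 x) - LL (ee3 x) + LL (ee4 x)

def Om : Set XX := {x | 1 - ee1 x ∈ Complex.slitPlane ∧ 1 - ee2 x ∈ Complex.slitPlane ∧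
  1 - ee3 x ∈ Complex.slitPlane ∧ 1 - ee4 x ∈ Complex.slitPlane ∧
  1 - ee5 x ∈ Complex.slitPlane}

lemma isOpen_Om : IsOpen Om := by
  have h : ∀ f : XX → ℂ, Continuous f → IsOpen {x : XX | 1 - Complex.exp (f x) ∈ Complex.slitPlane} := by
    intro f hf
    exact Complex.isOpen_slitPlane.preimage (by fun_prop)
  apply IsOpen.inter (h _ (by fun_prop))
  apply IsOpen.inter (h _ (by fun_prop))
  apply IsOpen.inter (h _ (by fun_prop))
  exact IsOpen.inter (h _ (by fun_prop)) (h _ (by fun_prop))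

lemma D1 {ε : ℂ} {x : XX} (hx : x ∈ Om) :
    HasDerivAt (fun w => PhiS ε x.1.1 x.1.2 w x.2.2) (FF1 ε x) x.2.1 := by
  obtain ⟨h1, h2, h3, h4, h5⟩ := hx
  set s₁ := x.1.1; set s₂ := x.1.2; set z₁ := x.2.1; set z₂ := x.2.2
  have hT1 : HasDerivAt (fun w : ℂ => ε * (cc*(s₁ - 1)) * (cc*(w - 1/2)))
      (ε * (cc*(s₁-1)) * cc) z₁ := by
    simpa only [id, mul_one] using (((hasDerivAt_id z₁).sub_const (1/2)).const_mul cc).const_mul (ε * (cc*(s₁-1)))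
  have hT2 : HasDerivAt (fun w : ℂ => (cc*(s₂-1)) * (cc*w + cc*z₂))
      ((cc*(s₂-1)) * cc) z₁ := by
    simpa using (((hasDerivAt_id z₁).const_mul cc).add_const (cc*z₂)).const_mul (cc*(s₂-1))
  have hi1 : HasDerivAt (fun w : ℂ => cc*(s₂-1) - cc*w - cc*z₂) (-cc) z₁ := by
    simpa using (((hasDerivAt_id z₁).const_mul cc).const_sub (cc*(s₂-1))).sub_const (cc*z₂)
  have hT3 := hasDerivAt_Li2_exp_comp hi1 h1
  have hi4 : HasDerivAt (fun w : ℂ => cc*(w + z₂)) cc z₁ := by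
    simpa using ((hasDerivAt_id z₁).add_const z₂).const_mul cc
  have hT6 := hasDerivAt_Li2_exp_comp hi4 h4
  have hi5 : HasDerivAt (fun w : ℂ => cc*w) cc z₁ := by
    simpa using (hasDerivAt_id z₁).const_mul cc
  have hT7 := hasDerivAt_Li2_exp_comp hi5 h5
  have H := (((((hT1.sub hT2).add hT3).sub_const
      (Li2 (Complex.exp (cc*(s₂ - 1) - cc*z₂)))).add_const
      (Li2 (Complex.exp (cc*z₂)))).sub hT6).add hT7
  have H2 := H.const_mul (1 / cc)
  have hval : (1/cc) * (ε * (cc*(s₁-1)) * cc - (cc*(s₂-1)) * cc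
      + -Complex.log (1 - Complex.exp (cc*(s₂-1) - cc*z₁ - cc*z₂)) * -cc
      - -Complex.log (1 - Complex.exp (cc*(z₁+z₂))) * cc
      + -Complex.log (1 - Complex.exp (cc*z₁)) * cc) = FF1 ε x := by
    rw [FF1, LL, LL, LL, ee1, ee4, ee5]
    field_simp [cc_ne]
    ring
  rw [hval] at H2
  exact H2

lemma D2 {ε : ℂ} {x : XX} (hx : x ∈ Om) :
    HasDerivAt (fun w => PhiS ε x.1.1 x.1.2 x.2.1 w) (FF2 x) x.2.2 := by
  obtain ⟨h1, h2, h3, h4, h5⟩ := hx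
  set s₁ := x.1.1; set s₂ := x.1.2; set z₁ := x.2.1; set z₂ := x.2.2
  have hT2 : HasDerivAt (fun w : ℂ => (cc*(s₂-1)) * (cc*z₁ + cc*w))
      ((cc*(s₂-1)) * cc) z₂ := by
    simpa using (((hasDerivAt_id z₂).const_mul cc).const_add (cc*z₁)).const_mul (cc*(s₂-1))
  have hi1 : HasDerivAt (fun w : ℂ => cc*(s₂-1) - cc*z₁ - cc*w) (-cc) z₂ := by
    simpa using ((hasDerivAt_id z₂).const_mul cc).const_sub (cc*(s₂-1) - cc*z₁)
  have hT3 := hasDerivAt_Li2_exp_comp hi1 h1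
  have hi2 : HasDerivAt (fun w : ℂ => cc*(s₂-1) - cc*w) (-cc) z₂ := by
    simpa using ((hasDerivAt_id z₂).const_mul cc).const_sub (cc*(s₂-1))
  have hT4 := hasDerivAt_Li2_exp_comp hi2 h2
  have hi3 : HasDerivAt (fun w : ℂ => cc*w) cc z₂ := by
    simpa using (hasDerivAt_id z₂).const_mul cc
  have hT5 := hasDerivAt_Li2_exp_comp hi3 h3
  have hi4 : HasDerivAt (fun w : ℂ => cc*(z₁ + w)) cc z₂ := by
    simpa using ((hasDerivAt_id z₂).const_add z₁).const_mul cc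
  have hT6 := hasDerivAt_Li2_exp_comp hi4 h4
  have H := ((((((hasDerivAt_const z₂ (ε * (cc*(s₁ - 1)) * (cc*(z₁ - 1/2)))).sub
      hT2).add hT3).sub hT4).add hT5).sub hT6).add_const (Li2 (Complex.exp (cc*z₁)))
  have H2 := H.const_mul (1 / cc)
  have hval : (1/cc) * (0 - (cc*(s₂-1)) * cc
      + -Complex.log (1 - Complex.exp (cc*(s₂-1) - cc*z₁ - cc*z₂)) * -cc
      - -Complex.log (1 - Complex.exp (cc*(s₂-1) - cc*z₂)) * -cc
      + -Complex.log (1 - Complex.exp (cc*z₂)) * cc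
      - -Complex.log (1 - Complex.exp (cc*(z₁+z₂))) * cc) = FF2 x := by
    rw [FF2, LL, LL, LL, LL, ee1, ee2, ee3, ee4]
    field_simp [cc_ne]
    ring
  rw [hval] at H2
  exact H2

lemma H11 {ε : ℂ} {x : XX} (hx : x ∈ Om) :
    HasDerivAt (fun w => FF1 ε (x.1, (w, x.2.2)))
      (cc * (QQ (ee1 x) - QQ (ee4 x) + QQ (ee5 x))) x.2.1 := by
  obtain ⟨h1, h2, h3, h4, h5⟩ := hx
  set s₁ := x.1.1; set s₂ := x.1.2; set z₁ := x.2.1; set z₂ := x.2.2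
  have hi1 : HasDerivAt (fun w : ℂ => cc*(s₂-1) - cc*w - cc*z₂) (-cc) z₁ := by
    simpa using (((hasDerivAt_id z₁).const_mul cc).const_sub (cc*(s₂-1))).sub_const (cc*z₂)
  have hT3 := hasDerivAt_log_one_sub_exp_comp hi1 h1
  have hi4 : HasDerivAt (fun w : ℂ => cc*(w + z₂)) cc z₁ := by
    simpa using ((hasDerivAt_id z₁).add_const z₂).const_mul cc
  have hT6 := hasDerivAt_log_one_sub_exp_comp hi4 h4
  have hi5 : HasDerivAt (fun w : ℂ => cc*w) cc z₁ := by
    simpa using (hasDerivAt_id z₁).const_mul cc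
  have hT7 := hasDerivAt_log_one_sub_exp_comp hi5 h5
  have H := (((hasDerivAt_const z₁ (ε*cc*(s₁-1) - cc*(s₂-1))).add hT3).add hT6).sub hT7
  have hval : (0 + -(Complex.exp (cc*(s₂-1) - cc*z₁ - cc*z₂) /
        (1 - Complex.exp (cc*(s₂-1) - cc*z₁ - cc*z₂))) * -cc
      + -(Complex.exp (cc*(z₁+z₂)) / (1 - Complex.exp (cc*(z₁+z₂)))) * cc
      - -(Complex.exp (cc*z₁) / (1 - Complex.exp (cc*z₁))) * cc)
      = cc * (QQ (ee1 x) - QQ (ee4 x) + QQ (ee5 x)) := by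
    rw [QQ, QQ, QQ, ee1, ee4, ee5]
    ring
  rw [hval] at H
  have : (fun w => FF1 ε (x.1, (w, x.2.2))) = (fun w => (ε*cc*(s₁-1) - cc*(s₂-1))
      + Complex.log (1 - Complex.exp (cc*(s₂-1) - cc*w - cc*z₂))
      + Complex.log (1 - Complex.exp (cc*(w+z₂)))
      - Complex.log (1 - Complex.exp (cc*w))) := by
    funext w
    simp only [FF1, LL, ee1, ee4, ee5]
    rfl
  rw [this]
  exact H

lemma H21 {x : XX} (hx : x ∈ Om) :
    HasDerivAt (fun w => FF2 (x.1, (w, x.2.2)))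
      (cc * (QQ (ee1 x) - QQ (ee4 x))) x.2.1 := by
  obtain ⟨h1, h2, h3, h4, h5⟩ := hx
  set s₁ := x.1.1; set s₂ := x.1.2; set z₁ := x.2.1; set z₂ := x.2.2
  have hi1 : HasDerivAt (fun w : ℂ => cc*(s₂-1) - cc*w - cc*z₂) (-cc) z₁ := by
    simpa using (((hasDerivAt_id z₁).const_mul cc).const_sub (cc*(s₂-1))).sub_const (cc*z₂)
  have hT3 := hasDerivAt_log_one_sub_exp_comp hi1 h1
  have hi4 : HasDerivAt (fun w : ℂ => cc*(w + z₂)) cc z₁ := by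
    simpa using ((hasDerivAt_id z₁).add_const z₂).const_mul cc
  have hT6 := hasDerivAt_log_one_sub_exp_comp hi4 h4
  have H := ((hasDerivAt_const z₁ (-(cc*(s₂-1)) - LL (ee2 x) - LL (ee3 x))).add hT3).add hT6
  have hval : (0 + -(Complex.exp (cc*(s₂-1) - cc*z₁ - cc*z₂) /
        (1 - Complex.exp (cc*(s₂-1) - cc*z₁ - cc*z₂))) * -cc
      + -(Complex.exp (cc*(z₁+z₂)) / (1 - Complex.exp (cc*(z₁+z₂)))) * cc)
      = cc * (QQ (ee1 x) - QQ (ee4 x)) := by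
    rw [QQ, QQ, ee1, ee4]
    ring
  rw [hval] at H
  have : (fun w => FF2 (x.1, (w, x.2.2))) = (fun w => (-(cc*(s₂-1)) - LL (ee2 x) - LL (ee3 x))
      + Complex.log (1 - Complex.exp (cc*(s₂-1) - cc*w - cc*z₂))
      + Complex.log (1 - Complex.exp (cc*(w+z₂)))) := by
    funext w
    simp only [FF2, LL, ee1, ee2, ee3, ee4]
    ring
  rw [this]
  exact H

lemma H22 {x : XX} (hx : x ∈ Om) :
    HasDerivAt (fun w => FF2 (x.1, (x.2.1, w)))
      (cc * (QQ (ee1 x) - QQ (ee2 x) + QQ (ee3 x) - QQ (ee4 x))) x.2.2 := by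
  obtain ⟨h1, h2, h3, h4, h5⟩ := hx
  set s₁ := x.1.1; set s₂ := x.1.2; set z₁ := x.2.1; set z₂ := x.2.2
  have hi1 : HasDerivAt (fun w : ℂ => cc*(s₂-1) - cc*z₁ - cc*w) (-cc) z₂ := by
    simpa using ((hasDerivAt_id z₂).const_mul cc).const_sub (cc*(s₂-1) - cc*z₁)
  have hT3 := hasDerivAt_log_one_sub_exp_comp hi1 h1
  have hi2 : HasDerivAt (fun w : ℂ => cc*(s₂-1) - cc*w) (-cc) z₂ := by
    simpa using ((hasDerivAt_id z₂).const_mul cc).const_sub (cc*(s₂-1))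
  have hT4 := hasDerivAt_log_one_sub_exp_comp hi2 h2
  have hi3 : HasDerivAt (fun w : ℂ => cc*w) cc z₂ := by
    simpa using (hasDerivAt_id z₂).const_mul cc
  have hT5 := hasDerivAt_log_one_sub_exp_comp hi3 h3
  have hi4 : HasDerivAt (fun w : ℂ => cc*(z₁ + w)) cc z₂ := by
    simpa using ((hasDerivAt_id z₂).const_add z₁).const_mul cc
  have hT6 := hasDerivAt_log_one_sub_exp_comp hi4 h4
  have H := ((((hasDerivAt_const z₂ (-(cc*(s₂-1)))).add hT3).sub hT4).sub hT5).add hT6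
  have hval : (0 + -(Complex.exp (cc*(s₂-1) - cc*z₁ - cc*z₂) /
        (1 - Complex.exp (cc*(s₂-1) - cc*z₁ - cc*z₂))) * -cc
      - -(Complex.exp (cc*(s₂-1) - cc*z₂) / (1 - Complex.exp (cc*(s₂-1) - cc*z₂))) * -cc
      - -(Complex.exp (cc*z₂) / (1 - Complex.exp (cc*z₂))) * cc
      + -(Complex.exp (cc*(z₁+z₂)) / (1 - Complex.exp (cc*(z₁+z₂)))) * cc)
      = cc * (QQ (ee1 x) - QQ (ee2 x) + QQ (ee3 x) - QQ (ee4 x)) := by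
    rw [QQ, QQ, QQ, QQ, ee1, ee2, ee3, ee4]
    ring
  rw [hval] at H
  have : (fun w => FF2 (x.1, (x.2.1, w))) = (fun w => (-(cc*(s₂-1)))
      + Complex.log (1 - Complex.exp (cc*(s₂-1) - cc*z₁ - cc*w))
      - Complex.log (1 - Complex.exp (cc*(s₂-1) - cc*w))
      - Complex.log (1 - Complex.exp (cc*w))
      + Complex.log (1 - Complex.exp (cc*(z₁+w)))) := by
    funext w
    simp only [FF2, LL, ee1, ee2, ee3, ee4]
    rfl
  rw [this]
  exact H

noncomputable def pi1 : XX →L[ℂ] ℂ :=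
  (ContinuousLinearMap.fst ℂ ℂ ℂ).comp (ContinuousLinearMap.fst ℂ (ℂ × ℂ) (ℂ × ℂ))
noncomputable def pi2 : XX →L[ℂ] ℂ :=
  (ContinuousLinearMap.snd ℂ ℂ ℂ).comp (ContinuousLinearMap.fst ℂ (ℂ × ℂ) (ℂ × ℂ))
noncomputable def pi3 : XX →L[ℂ] ℂ :=
  (ContinuousLinearMap.fst ℂ ℂ ℂ).comp (ContinuousLinearMap.snd ℂ (ℂ × ℂ) (ℂ × ℂ))
noncomputable def pi4 : XX →L[ℂ] ℂ :=
  (ContinuousLinearMap.snd ℂ ℂ ℂ).comp (ContinuousLinearMap.snd ℂ (ℂ × ℂ) (ℂ × ℂ))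

@[simp] lemma pi1_apply (y : XX) : pi1 y = y.1.1 := by rfl
@[simp] lemma pi2_apply (y : XX) : pi2 y = y.1.2 := by rfl
@[simp] lemma pi3_apply (y : XX) : pi3 y = y.2.1 := by rfl
@[simp] lemma pi4_apply (y : XX) : pi4 y = y.2.2 := by rfl

noncomputable def lam1 : XX →L[ℂ] ℂ := cc • pi2 - cc • pi3 - cc • pi4
noncomputable def lam2 : XX →L[ℂ] ℂ := cc • pi2 - cc • pi4
noncomputable def lam3 : XX →L[ℂ] ℂ := cc • pi4
noncomputable def lam4 : XX →L[ℂ] ℂ := cc • pi3 + cc • pi4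
noncomputable def lam5 : XX →L[ℂ] ℂ := cc • pi3

noncomputable def Lam1 (ε : ℂ) (x : XX) : XX →L[ℂ] ℂ :=
  (ε*cc) • pi1 - cc • pi2 + (-QQ (ee1 x)) • lam1 + (-QQ (ee4 x)) • lam4 - (-QQ (ee5 x)) • lam5
noncomputable def Lam2 (x : XX) : XX →L[ℂ] ℂ :=
  (-cc) • pi2 + (-QQ (ee1 x)) • lam1 - (-QQ (ee2 x)) • lam2 - (-QQ (ee3 x)) • lam3
    + (-QQ (ee4 x)) • lam4

noncomputable def PsiMap (ε : ℂ) (x : XX) : XX := (x.1, (FF1 ε x, FF2 x))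

noncomputable def LamPsi (ε : ℂ) (x : XX) : XX →L[ℂ] XX :=
  (ContinuousLinearMap.fst ℂ (ℂ × ℂ) (ℂ × ℂ)).prod ((Lam1 ε x).prod (Lam2 x))

lemma hasDerivAt_logexp {w : ℂ} (h : 1 - Complex.exp w ∈ Complex.slitPlane) :
    HasDerivAt (fun w => Complex.log (1 - Complex.exp w))
      (-(Complex.exp w / (1 - Complex.exp w))) w := by
  simpa using hasDerivAt_log_one_sub_exp_comp (hasDerivAt_id w) h

lemma hfd_l1 (x : XX) :
    HasFDerivAt (fun y : XX => cc*(y.1.2-1) - cc*y.2.1 - cc*y.2.2) lam1 x := by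
  have h : (fun y : XX => cc*(y.1.2-1) - cc*y.2.1 - cc*y.2.2)
      = fun y : XX => lam1 y + (-cc) := by
    funext y
    simp [lam1, smul_eq_mul]
    ring
  rw [h]
  exact lam1.hasFDerivAt.add_const _

lemma hfd_l2 (x : XX) :
    HasFDerivAt (fun y : XX => cc*(y.1.2-1) - cc*y.2.2) lam2 x := by
  have h : (fun y : XX => cc*(y.1.2-1) - cc*y.2.2) = fun y : XX => lam2 y + (-cc) := by
    funext y
    simp [lam2, smul_eq_mul]
    ring
  rw [h]
  exact lam2.hasFDerivAt.add_const _

lemma hfd_l3 (x : XX) : HasFDerivAt (fun y : XX => cc*y.2.2) lam3 x := by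
  have h : (fun y : XX => cc*y.2.2) = fun y : XX => lam3 y := by
    funext y
    simp [lam3, smul_eq_mul]
  rw [h]
  exact lam3.hasFDerivAt

lemma hfd_l4 (x : XX) : HasFDerivAt (fun y : XX => cc*(y.2.1 + y.2.2)) lam4 x := by
  have h : (fun y : XX => cc*(y.2.1 + y.2.2)) = fun y : XX => lam4 y := by
    funext y
    simp [lam4, smul_eq_mul]
    ring
  rw [h]
  exact lam4.hasFDerivAt

lemma hfd_l5 (x : XX) : HasFDerivAt (fun y : XX => cc*y.2.1) lam5 x := by
  have h : (fun y : XX => cc*y.2.1) = fun y : XX => lam5 y := by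
    funext y
    simp [lam5, smul_eq_mul]
  rw [h]
  exact lam5.hasFDerivAt

lemma hfdF1 {ε : ℂ} {x : XX} (hx : x ∈ Om) : HasFDerivAt (FF1 ε) (Lam1 ε x) x := by
  obtain ⟨h1, h2, h3, h4, h5⟩ := hx
  have ha : HasFDerivAt (fun y : XX => ε*cc*(y.1.1-1) - cc*(y.1.2-1))
      ((ε*cc) • pi1 - cc • pi2) x := by
    have h : (fun y : XX => ε*cc*(y.1.1-1) - cc*(y.1.2-1))
        = fun y : XX => ((ε*cc) • pi1 - cc • pi2) y + (-(ε*cc) + cc) := by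
      funext y
      simp [smul_eq_mul]
      ring
    rw [h]
    exact ((ε*cc) • pi1 - cc • pi2).hasFDerivAt.add_const _
  have hb := (hasDerivAt_logexp h1).comp_hasFDerivAt x (hfd_l1 x)
  have hc := (hasDerivAt_logexp h4).comp_hasFDerivAt x (hfd_l4 x)
  have hd := (hasDerivAt_logexp h5).comp_hasFDerivAt x (hfd_l5 x)
  exact ((ha.add hb).add hc).sub hd

lemma hfdF2 {x : XX} (hx : x ∈ Om) : HasFDerivAt FF2 (Lam2 x) x := by
  obtain ⟨h1, h2, h3, h4, h5⟩ := hx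
  have ha : HasFDerivAt (fun y : XX => -(cc*(y.1.2-1))) ((-cc) • pi2) x := by
    have h : (fun y : XX => -(cc*(y.1.2-1))) = fun y : XX => ((-cc) • pi2) y + cc := by
      funext y
      simp [smul_eq_mul]
      ring
    rw [h]
    exact ((-cc) • pi2).hasFDerivAt.add_const _
  have hb := (hasDerivAt_logexp h1).comp_hasFDerivAt x (hfd_l1 x)
  have hc := (hasDerivAt_logexp h2).comp_hasFDerivAt x (hfd_l2 x)
  have hd := (hasDerivAt_logexp h3).comp_hasFDerivAt x (hfd_l3 x)
  have he := (hasDerivAt_logexp h4).comp_hasFDerivAt x (hfd_l4 x)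
  exact (((ha.add hb).sub hc).sub hd).add he

lemma hfdPsi {ε : ℂ} {x : XX} (hx : x ∈ Om) : HasFDerivAt (PsiMap ε) (LamPsi ε x) x := by
  unfold PsiMap LamPsi
  exact (hasFDerivAt_fst).prodMk ((hfdF1 hx).prodMk (hfdF2 hx))

lemma contDiffAt_LLexp {f : XX → ℂ} (hf : ContDiff ℂ 1 f) {x : XX}
    (h : 1 - Complex.exp (f x) ∈ Complex.slitPlane) :
    ContDiffAt ℂ 1 (fun y => Complex.log (1 - Complex.exp (f y))) x :=
  (Complex.contDiffAt_log h).comp (g := Complex.log) x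
    ((contDiff_const.sub (Complex.contDiff_exp.comp hf)).contDiffAt)

lemma contDiffAtF1 {ε : ℂ} {x : XX} (hx : x ∈ Om) : ContDiffAt ℂ 1 (FF1 ε) x := by
  obtain ⟨h1, h2, h3, h4, h5⟩ := hx
  have ha : ContDiffAt ℂ 1 (fun y : XX => ε*cc*(y.1.1-1) - cc*(y.1.2-1)) x := by
    apply ContDiff.contDiffAt
    fun_prop
  have hb := contDiffAt_LLexp (f := fun y : XX => cc*(y.1.2-1) - cc*y.2.1 - cc*y.2.2)
    (by fun_prop) h1
  have hc := contDiffAt_LLexp (f := fun y : XX => cc*(y.2.1 + y.2.2)) (by fun_prop) h4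
  have hd := contDiffAt_LLexp (f := fun y : XX => cc*y.2.1) (by fun_prop) h5
  exact ((ha.add hb).add hc).sub hd

lemma contDiffAtF2 {x : XX} (hx : x ∈ Om) : ContDiffAt ℂ 1 FF2 x := by
  obtain ⟨h1, h2, h3, h4, h5⟩ := hx
  have ha : ContDiffAt ℂ 1 (fun y : XX => -(cc*(y.1.2-1))) x := by
    apply ContDiff.contDiffAt
    fun_prop
  have hb := contDiffAt_LLexp (f := fun y : XX => cc*(y.1.2-1) - cc*y.2.1 - cc*y.2.2)
    (by fun_prop) h1
  have hc := contDiffAt_LLexp (f := fun y : XX => cc*(y.1.2-1) - cc*y.2.2) (by fun_prop) h2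
  have hd := contDiffAt_LLexp (f := fun y : XX => cc*y.2.2) (by fun_prop) h3
  have he := contDiffAt_LLexp (f := fun y : XX => cc*(y.2.1 + y.2.2)) (by fun_prop) h4
  exact (((ha.add hb).sub hc).sub hd).add he

lemma hstrictPsi {ε : ℂ} {x : XX} (hx : x ∈ Om) :
    HasStrictFDerivAt (PsiMap ε) (LamPsi ε x) x := by
  have hcd : ContDiffAt ℂ 1 (PsiMap ε) x := by
    unfold PsiMap
    exact (contDiff_fst.contDiffAt).prodMk ((contDiffAtF1 hx).prodMk (contDiffAtF2 hx))
  have hs := hcd.hasStrictFDerivAt one_ne_zero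
  rwa [(hfdPsi hx).fderiv] at hs

noncomputable def det2 (x : XX) : ℂ :=
  (QQ (ee1 x) - QQ (ee4 x) + QQ (ee5 x)) * (QQ (ee1 x) - QQ (ee2 x) + QQ (ee3 x) - QQ (ee4 x))
    - (QQ (ee1 x) - QQ (ee4 x)) ^ 2

lemma LamPsi_inj {ε : ℂ} {x : XX} (hd : det2 x ≠ 0) : Function.Injective (LamPsi ε x) := by
  intro y y' h
  have h0 : LamPsi ε x (y - y') = 0 := by rw [map_sub, h, sub_self]
  rw [← sub_eq_zero]
  set v := y - y' with hv
  clear_value v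
  clear h hv y y'
  -- expand
  simp only [LamPsi, Lam1, Lam2, lam1, lam2, lam3, lam4, lam5,
    ContinuousLinearMap.prod_apply, ContinuousLinearMap.add_apply,
    ContinuousLinearMap.sub_apply, ContinuousLinearMap.smul_apply, ContinuousLinearMap.coe_fst',
    pi1_apply, pi2_apply, pi3_apply, pi4_apply, smul_eq_mul, Prod.mk_eq_zero] at h0
  obtain ⟨hu, hz1, hz2⟩ := h0
  have hu1 : v.1.1 = 0 := by rw [hu]; rfl
  have hu2 : v.1.2 = 0 := by rw [hu]; rfl
  rw [hu1, hu2] at hz1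
  rw [hu2] at hz2
  set A := QQ (ee1 x) - QQ (ee4 x) + QQ (ee5 x) with hA
  set B := QQ (ee1 x) - QQ (ee4 x) with hB
  set D := QQ (ee1 x) - QQ (ee2 x) + QQ (ee3 x) - QQ (ee4 x) with hD
  have e1 : cc * (A * v.2.1 + B * v.2.2) = 0 := by rw [hA, hB]; linear_combination hz1
  have e2 : cc * (B * v.2.1 + D * v.2.2) = 0 := by rw [hB, hD]; linear_combination hz2
  have e1' : A * v.2.1 + B * v.2.2 = 0 := by
    rcases mul_eq_zero.mp e1 with h | h
    · exact absurd h cc_ne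
    · exact h
  have e2' : B * v.2.1 + D * v.2.2 = 0 := by
    rcases mul_eq_zero.mp e2 with h | h
    · exact absurd h cc_ne
    · exact h
  have hdet : A * D - B ^ 2 ≠ 0 := by rw [hA, hB, hD]; exact hd
  have hv1 : v.2.1 = 0 := by
    have : (A * D - B ^ 2) * v.2.1 = 0 := by linear_combination D * e1' - B * e2'
    rcases mul_eq_zero.mp this with h | h
    · exact absurd h hdet
    · exact h
  have hv2 : v.2.2 = 0 := by
    have : (A * D - B ^ 2) * v.2.2 = 0 := by linear_combination A * e2' - B * e1'
    rcases mul_eq_zero.mp this with h | h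
    · exact absurd h hdet
    · exact h
  have : v = ((v.1.1, v.1.2), (v.2.1, v.2.2)) := rfl
  rw [this, hu1, hu2, hv1, hv2]
  rfl

noncomputable def LamE (ε : ℂ) (x : XX) (hd : det2 x ≠ 0) : XX ≃L[ℂ] XX :=
  LinearEquiv.toContinuousLinearEquiv
    (LinearEquiv.ofBijective ((LamPsi ε x) : XX →ₗ[ℂ] XX)
      ⟨LamPsi_inj hd, LinearMap.injective_iff_surjective.mp (LamPsi_inj hd)⟩)

lemma LamE_coe (ε : ℂ) (x : XX) (hd : det2 x ≠ 0) :
    ((LamE ε x hd : XX ≃L[ℂ] XX) : XX →L[ℂ] XX) = LamPsi ε x := by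
  apply ContinuousLinearMap.ext
  intro y
  rfl

noncomputable def basept : XX := ((1,1),(1/2,1/4))

lemma cexp_real_mul_I (r : ℝ) : Complex.exp ((r:ℂ) * Complex.I)
    = ((Real.cos r : ℝ) : ℂ) + ((Real.sin r : ℝ) : ℂ) * Complex.I := by
  rw [Complex.exp_mul_I, ← Complex.ofReal_cos, ← Complex.ofReal_sin]

lemma rcos32 : Real.cos (3*π/2) = 0 := by
  have h : 3*π/2 = π + π/2 := by ring
  rw [h, Real.cos_add, Real.cos_pi, Real.sin_pi, Real.cos_pi_div_two]
  ring

lemma rsin32 : Real.sin (3*π/2) = -1 := by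
  have h : 3*π/2 = π + π/2 := by ring
  rw [h, Real.sin_add, Real.cos_pi, Real.sin_pi, Real.sin_pi_div_two]
  ring

lemma base_ee1 : ee1 basept = Complex.I := by
  rw [ee1, basept]
  have harg : cc*((1:ℂ)-1) - cc*(1/2:ℂ) - cc*(1/4:ℂ) = ((-(3*π/2) : ℝ) : ℂ) * Complex.I := by
    push_cast
    ring
  rw [show (((1:ℂ),(1:ℂ)),((1/2:ℂ),(1/4:ℂ))).1.2 = (1:ℂ) from rfl]
  rw [show (((1:ℂ),(1:ℂ)),((1/2:ℂ),(1/4:ℂ))).2.1 = (1/2:ℂ) from rfl]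
  rw [show (((1:ℂ),(1:ℂ)),((1/2:ℂ),(1/4:ℂ))).2.2 = (1/4:ℂ) from rfl]
  rw [harg, cexp_real_mul_I, Real.cos_neg, Real.sin_neg, rcos32, rsin32]
  push_cast
  ring

lemma base_ee2 : ee2 basept = -Complex.I := by
  rw [ee2, basept]
  have harg : cc*((1:ℂ)-1) - cc*(1/4:ℂ) = ((-(π/2) : ℝ) : ℂ) * Complex.I := by
    push_cast
    ring
  rw [show (((1:ℂ),(1:ℂ)),((1/2:ℂ),(1/4:ℂ))).1.2 = (1:ℂ) from rfl]
  rw [show (((1:ℂ),(1:ℂ)),((1/2:ℂ),(1/4:ℂ))).2.2 = (1/4:ℂ) from rfl]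
  rw [harg, cexp_real_mul_I, Real.cos_neg, Real.sin_neg, Real.cos_pi_div_two,
    Real.sin_pi_div_two]
  push_cast
  ring

lemma base_ee3 : ee3 basept = Complex.I := by
  rw [ee3, basept]
  have harg : cc*(1/4:ℂ) = ((π/2 : ℝ) : ℂ) * Complex.I := by
    push_cast
    ring
  rw [show (((1:ℂ),(1:ℂ)),((1/2:ℂ),(1/4:ℂ))).2.2 = (1/4:ℂ) from rfl]
  rw [harg, cexp_real_mul_I, Real.cos_pi_div_two, Real.sin_pi_div_two]
  push_cast
  ring

lemma base_ee4 : ee4 basept = -Complex.I := by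
  rw [ee4, basept]
  have harg : cc*((1/2:ℂ) + (1/4:ℂ)) = ((3*π/2 : ℝ) : ℂ) * Complex.I := by
    push_cast
    ring
  rw [show (((1:ℂ),(1:ℂ)),((1/2:ℂ),(1/4:ℂ))).2.1 = (1/2:ℂ) from rfl]
  rw [show (((1:ℂ),(1:ℂ)),((1/2:ℂ),(1/4:ℂ))).2.2 = (1/4:ℂ) from rfl]
  rw [harg, cexp_real_mul_I, rcos32, rsin32]
  push_cast
  ring

lemma base_ee5 : ee5 basept = -1 := by
  rw [ee5, basept]
  have harg : cc*(1/2:ℂ) = ((π : ℝ) : ℂ) * Complex.I := by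
    push_cast
    ring
  rw [show (((1:ℂ),(1:ℂ)),((1/2:ℂ),(1/4:ℂ))).2.1 = (1/2:ℂ) from rfl]
  rw [harg, cexp_real_mul_I, Real.cos_pi, Real.sin_pi]
  push_cast
  ring

lemma slit_of_I : (1 : ℂ) - Complex.I ∈ Complex.slitPlane := by
  rw [Complex.mem_slitPlane_iff]
  left
  simp

lemma slit_of_negI : (1 : ℂ) - (-Complex.I) ∈ Complex.slitPlane := by
  rw [Complex.mem_slitPlane_iff]
  left
  simp

lemma slit_of_neg1 : (1 : ℂ) - (-1) ∈ Complex.slitPlane := by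
  rw [Complex.mem_slitPlane_iff]
  left
  norm_num

lemma base_mem_Om : basept ∈ Om := by
  refine ⟨?_, ?_, ?_, ?_, ?_⟩ <;>
    simp only [base_ee1, base_ee2, base_ee3, base_ee4, base_ee5]
  · exact slit_of_I
  · exact slit_of_negI
  · exact slit_of_I
  · exact slit_of_negI
  · exact slit_of_neg1

lemma hImI : (1:ℂ) - Complex.I ≠ 0 := by
  simp [Complex.ext_iff]

lemma hIpI : (1:ℂ) + Complex.I ≠ 0 := by
  simp [Complex.ext_iff]

lemma QQ_I : QQ Complex.I = (Complex.I - 1)/2 := by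
  rw [QQ, div_eq_div_iff hImI two_ne_zero]
  linear_combination Complex.I_sq

lemma QQ_negI : QQ (-Complex.I) = (-Complex.I - 1)/2 := by
  rw [QQ, show (1:ℂ) - -Complex.I = 1 + Complex.I by ring, div_eq_div_iff hIpI two_ne_zero]
  linear_combination Complex.I_sq

lemma QQ_neg1 : QQ (-1 : ℂ) = -(1/2) := by
  rw [QQ]
  norm_num

lemma base_det2 : det2 basept = -1 - Complex.I := by
  rw [det2, base_ee1, base_ee2, base_ee3, base_ee4, base_ee5, QQ_I, QQ_negI, QQ_neg1]
  linear_combination Complex.I_sq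

lemma base_det2_ne : det2 basept ≠ 0 := by
  rw [base_det2]
  simp [Complex.ext_iff]

lemma base_FF2 : FF2 basept = 0 := by
  rw [FF2, base_ee1, base_ee2, base_ee3, base_ee4]
  rw [show basept.1.2 = (1:ℂ) from rfl]
  ring

lemma base_FF1 (ε : ℂ) : FF1 ε basept = 0 := by
  rw [FF1, base_ee1, base_ee4, base_ee5]
  rw [show basept.1.1 = (1:ℂ) from rfl, show basept.1.2 = (1:ℂ) from rfl]
  have hconj : (starRingEnd ℂ) (1 - Complex.I) = 1 + Complex.I := by
    simp
  have hargne : Complex.arg (1 - Complex.I) ≠ π := by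
    intro h
    have h2 := Complex.arg_eq_pi_iff.mp h
    simp at h2
  have hargsum : Complex.arg (1 - Complex.I) + Complex.arg (1 + Complex.I) = 0 := by
    rw [← hconj, Complex.arg_conj]
    simp [hargne]
  have hmul : Complex.log ((1 - Complex.I) * (1 + Complex.I))
      = Complex.log (1 - Complex.I) + Complex.log (1 + Complex.I) :=
    Complex.log_mul hImI hIpI (by
      rw [hargsum]
      constructor
      · linarith [Real.pi_pos]
      · linarith [Real.pi_pos])
  have hprod : (1 - Complex.I) * (1 + Complex.I) = 2 := by
    linear_combination -Complex.I_sq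
  rw [LL, LL, LL, show (1:ℂ) - -Complex.I = 1 + Complex.I by ring,
    show (1:ℂ) - -1 = (2:ℂ) by ring]
  rw [← hprod, hmul]
  ring

lemma cont_ee1 : Continuous ee1 := by unfold ee1; fun_prop
lemma cont_ee2 : Continuous ee2 := by unfold ee2; fun_prop
lemma cont_ee3 : Continuous ee3 := by unfold ee3; fun_prop
lemma cont_ee4 : Continuous ee4 := by unfold ee4; fun_prop
lemma cont_ee5 : Continuous ee5 := by unfold ee5; fun_prop

lemma contOn_det2 : ContinuousOn det2 Om := by
  have q1 : ContinuousOn (fun x => QQ (ee1 x)) Om := by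
    simp only [QQ]
    exact ContinuousOn.div cont_ee1.continuousOn (continuous_const.sub cont_ee1).continuousOn
      (fun x hx => Complex.slitPlane_ne_zero hx.1)
  have q2 : ContinuousOn (fun x => QQ (ee2 x)) Om := by
    simp only [QQ]
    exact ContinuousOn.div cont_ee2.continuousOn (continuous_const.sub cont_ee2).continuousOn
      (fun x hx => Complex.slitPlane_ne_zero hx.2.1)
  have q3 : ContinuousOn (fun x => QQ (ee3 x)) Om := by
    simp only [QQ]
    exact ContinuousOn.div cont_ee3.continuousOn (continuous_const.sub cont_ee3).continuousOn
      (fun x hx => Complex.slitPlane_ne_zero hx.2.2.1)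
  have q4 : ContinuousOn (fun x => QQ (ee4 x)) Om := by
    simp only [QQ]
    exact ContinuousOn.div cont_ee4.continuousOn (continuous_const.sub cont_ee4).continuousOn
      (fun x hx => Complex.slitPlane_ne_zero hx.2.2.2.1)
  have q5 : ContinuousOn (fun x => QQ (ee5 x)) Om := by
    simp only [QQ]
    exact ContinuousOn.div cont_ee5.continuousOn (continuous_const.sub cont_ee5).continuousOn
      (fun x hx => Complex.slitPlane_ne_zero hx.2.2.2.2)
  unfold det2
  exact (((q1.sub q4).add q5).mul (((q1.sub q2).add q3).sub q4)).sub ((q1.sub q4).pow 2)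

def OmP : Set XX := Om ∩ det2 ⁻¹' {0}ᶜ

lemma isOpen_OmP : IsOpen OmP :=
  contOn_det2.isOpen_inter_preimage isOpen_Om (isOpen_compl_singleton)

lemma base_mem_OmP : basept ∈ OmP := ⟨base_mem_Om, base_det2_ne⟩

lemma crit_of (ε : ℂ) (s p : ℂ × ℂ) (hmem : ((s,p) : XX) ∈ OmP)
    (h1 : FF1 ε (s,p) = 0) (h2 : FF2 (s,p) = 0) : IsNondegCritPt ε s p := by
  obtain ⟨hOm, hdet⟩ := hmem
  refine ⟨?_, ?_, ?_⟩
  · have hD := (D1 (ε := ε) (x := ((s,p) : XX)) hOm).deriv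
    rw [h1] at hD
    exact hD
  · have hD := (D2 (ε := ε) (x := ((s,p) : XX)) hOm).deriv
    rw [h2] at hD
    exact hD
  · have hnhds1 : ∀ᶠ z in 𝓝 p.1, ((s,(z,p.2)) : XX) ∈ Om := by
      have hc : Continuous (fun z : ℂ => ((s,(z,p.2)) : XX)) := by fun_prop
      exact (isOpen_Om.preimage hc).mem_nhds hOm
    have hnhds2 : ∀ᶠ z in 𝓝 p.2, ((s,(p.1,z)) : XX) ∈ Om := by
      have hc : Continuous (fun z : ℂ => ((s,(p.1,z)) : XX)) := by fun_prop
      exact (isOpen_Om.preimage hc).mem_nhds hOm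
    have hev1 : (fun z => deriv (fun w => PhiS ε s.1 s.2 w p.2) z)
        =ᶠ[𝓝 p.1] (fun z => FF1 ε (s,(z,p.2))) := by
      filter_upwards [hnhds1] with z hz
      exact (D1 (ε := ε) (x := ((s,(z,p.2)) : XX)) hz).deriv
    have hev2 : (fun z => deriv (fun w => PhiS ε s.1 s.2 z w) p.2)
        =ᶠ[𝓝 p.1] (fun z => FF2 (s,(z,p.2))) := by
      filter_upwards [hnhds1] with z hz
      exact (D2 (ε := ε) (x := ((s,(z,p.2)) : XX)) hz).deriv
    have hev3 : (fun z => deriv (fun w => PhiS ε s.1 s.2 p.1 w) z)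
        =ᶠ[𝓝 p.2] (fun z => FF2 (s,(p.1,z))) := by
      filter_upwards [hnhds2] with z hz
      exact (D2 (ε := ε) (x := ((s,(p.1,z)) : XX)) hz).deriv
    have h11 : deriv (fun z => deriv (fun w => PhiS ε s.1 s.2 w p.2) z) p.1
        = cc * (QQ (ee1 (s,p)) - QQ (ee4 (s,p)) + QQ (ee5 (s,p))) := by
      rw [hev1.deriv_eq]
      exact (H11 (ε := ε) (x := ((s,p) : XX)) hOm).deriv
    have h12 : deriv (fun z => deriv (fun w => PhiS ε s.1 s.2 z w) p.2) p.1
        = cc * (QQ (ee1 (s,p)) - QQ (ee4 (s,p))) := by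
      rw [hev2.deriv_eq]
      exact (H21 (x := ((s,p) : XX)) hOm).deriv
    have h22 : deriv (fun z => deriv (fun w => PhiS ε s.1 s.2 p.1 w) z) p.2
        = cc * (QQ (ee1 (s,p)) - QQ (ee2 (s,p)) + QQ (ee3 (s,p)) - QQ (ee4 (s,p))) := by
      rw [hev3.deriv_eq]
      exact (H22 (x := ((s,p) : XX)) hOm).deriv
    rw [h11, h12, h22]
    have hfac : cc * (QQ (ee1 (s,p)) - QQ (ee4 (s,p)) + QQ (ee5 (s,p)))
        * (cc * (QQ (ee1 (s,p)) - QQ (ee2 (s,p)) + QQ (ee3 (s,p)) - QQ (ee4 (s,p))))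
        - (cc * (QQ (ee1 (s,p)) - QQ (ee4 (s,p)))) ^ 2
        = cc^2 * det2 ((s,p) : XX) := by
      rw [det2]
      ring
    rw [hfac]
    exact mul_ne_zero (pow_ne_zero 2 cc_ne) hdet

lemma master (ε : ℂ) : ∃ U : Set (ℂ × ℂ), IsOpen U ∧ ((1, 1) : ℂ × ℂ) ∈ U ∧
    ∃ g : ℂ × ℂ → ℂ × ℂ, DifferentiableOn ℂ g U ∧ g (1, 1) = (1/2, 1/4) ∧
      ∀ s ∈ U, IsNondegCritPt ε s (g s) := by
  have hx0 : basept ∈ Om := base_mem_Om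
  have hd0 : det2 basept ≠ 0 := base_det2_ne
  have hstrictE : HasStrictFDerivAt (PsiMap ε)
      ((LamE ε basept hd0 : XX ≃L[ℂ] XX) : XX →L[ℂ] XX) basept := by
    rw [LamE_coe]
    exact hstrictPsi hx0
  set e := hstrictE.toOpenPartialHomeomorph (PsiMap ε) with he
  have hcoe : ⇑e = PsiMap ε := hstrictE.toOpenPartialHomeomorph_coe
  have hsrc : basept ∈ e.source := hstrictE.mem_toOpenPartialHomeomorph_source
  have hPsibase : PsiMap ε basept = (((1:ℂ),(1:ℂ)), ((0:ℂ),(0:ℂ))) := by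
    rw [PsiMap, base_FF1, base_FF2]
    rfl
  set V : Set XX := e.target ∩ e.symm ⁻¹' (OmP ∩ e.source) with hV
  have hVopen : IsOpen V := e.isOpen_inter_preimage_symm (isOpen_OmP.inter e.open_source)
  set U : Set (ℂ × ℂ) := {s | ((s, ((0:ℂ),(0:ℂ))) : XX) ∈ V} with hU
  have hUopen : IsOpen U := hVopen.preimage (continuous_id.prodMk continuous_const)
  have hbase_eq : ((((1:ℂ),(1:ℂ)), ((0:ℂ),(0:ℂ))) : XX) = e basept := by
    rw [hcoe, hPsibase]
  have hUmem : ((1:ℂ),(1:ℂ)) ∈ U := by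
    show ((((1:ℂ),(1:ℂ)), ((0:ℂ),(0:ℂ))) : XX) ∈ V
    rw [hbase_eq]
    refine ⟨e.map_source hsrc, ?_⟩
    rw [Set.mem_preimage, e.left_inv hsrc]
    exact ⟨base_mem_OmP, hsrc⟩
  set g : ℂ × ℂ → ℂ × ℂ := fun s => (e.symm ((s, ((0:ℂ),(0:ℂ))) : XX)).2 with hg
  -- facts for s ∈ U
  have key : ∀ s ∈ U, e.symm ((s, ((0:ℂ),(0:ℂ))) : XX) = ((s, g s) : XX)
      ∧ ((s, g s) : XX) ∈ OmP ∧ ((s, g s) : XX) ∈ e.source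
      ∧ FF1 ε (s, g s) = 0 ∧ FF2 (s, g s) = 0 := by
    intro s hs
    obtain ⟨hyT, hmem⟩ := hs
    rw [Set.mem_preimage] at hmem
    set y : XX := ((s, ((0:ℂ),(0:ℂ))) : XX) with hy
    set x := e.symm y with hxdef
    have hPsix : PsiMap ε x = y := by
      rw [← hcoe]
      exact e.right_inv hyT
    have hx1 : x.1 = s := by
      have := congrArg Prod.fst hPsix
      exact this
    have hxeq : x = ((s, g s) : XX) := by
      rw [hg]
      exact Prod.ext hx1 rfl
    refine ⟨hxeq, hxeq ▸ hmem.1, hxeq ▸ hmem.2, ?_, ?_⟩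
    · have := congrArg (fun z : XX => z.2.1) hPsix
      simpa [PsiMap, hxeq] using this
    · have := congrArg (fun z : XX => z.2.2) hPsix
      simpa [PsiMap, hxeq] using this
  refine ⟨U, hUopen, hUmem, g, ?_, ?_, ?_⟩
  · -- differentiability
    intro s hs
    obtain ⟨hxeq, hOmP, hxsrc, _, _⟩ := key s hs
    obtain ⟨hyT, hmem⟩ := hs
    have hdetx : det2 ((s, g s) : XX) ≠ 0 := hOmP.2
    have hfsymm : HasFDerivAt e.symm
        (((LamE ε ((s, g s) : XX) hdetx).symm : XX ≃L[ℂ] XX) : XX →L[ℂ] XX)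
        ((s, ((0:ℂ),(0:ℂ))) : XX) := by
      apply HasFDerivAt.of_local_left_inverse (e.continuousAt_symm hyT)
      · rw [LamE_coe, hxeq]
        exact hfdPsi hOmP.1
      · filter_upwards [e.open_target.mem_nhds hyT] with y' hy'
        rw [← hcoe]
        exact e.right_inv hy'
    have hdg : DifferentiableAt ℂ g s := by
      have h1 : DifferentiableAt ℂ (fun s : ℂ × ℂ => ((s, ((0:ℂ),(0:ℂ))) : XX)) s :=
        (differentiableAt_id.prodMk (differentiableAt_const _))
      exact (hfsymm.differentiableAt.comp s h1).snd
    exact hdg.differentiableWithinAt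
  · -- value at base
    show (e.symm ((((1:ℂ),(1:ℂ)), ((0:ℂ),(0:ℂ))) : XX)).2 = ((1/2 : ℂ), (1/4 : ℂ))
    rw [hbase_eq, e.left_inv hsrc]
    rfl
  · intro s hs
    obtain ⟨hxeq, hOmP, hxsrc, hF1, hF2⟩ := key s hs
    exact crit_of ε s (g s) hOmP hF1 hF2

theorem stmt_6 :
    ∃ U : Set (ℂ × ℂ), IsOpen U ∧ ((1, 1) : ℂ × ℂ) ∈ U ∧
    ∃ gp gm : ℂ × ℂ → ℂ × ℂ,
      DifferentiableOn ℂ gp U ∧ DifferentiableOn ℂ gm U ∧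
      gp (1, 1) = (1/2, 1/4) ∧ gm (1, 1) = (1/2, 1/4) ∧
      ∀ s ∈ U, IsNondegCritPt 1 s (gp s) ∧ IsNondegCritPt (-1) s (gm s) := by
  obtain ⟨U1, hU1o, hU1m, g1, hg1d, hg1v, hg1c⟩ := master 1
  obtain ⟨U2, hU2o, hU2m, g2, hg2d, hg2v, hg2c⟩ := master (-1)
  exact ⟨U1 ∩ U2, hU1o.inter hU2o, ⟨hU1m, hU2m⟩, g1, g2,
    hg1d.mono Set.inter_subset_left, hg2d.mono Set.inter_subset_right, hg1v, hg2v,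
    fun s hs => ⟨hg1c s hs.1, hg2c s hs.2⟩⟩
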